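/- Let E be a symplectic vector space of dimension 4 over an arbitrary field, with symplectic basis e_1, e_2, e_3, e_4 satisfying ⟨e_i, e_j⟩ = 1 if j = 5−i (i < j) and 0 otherwise. If a linear functional h on Λ²E vanishes on all decomposable tensors v∧w with ⟨v,w⟩ = 0 (i.e., on the cone over the Lagrangian Grassmannian L(2,E)), then h = A·(X_{14} + X_{23}) for some scalar A, where X_{ij} denotes the dual basis vector of e_i∧e_j. -/
import Mathlib


open Finset

/-- The 0-indexed partner of `i : Fin (2n)` is `2n-1-i`; in the paper's 1-indexed
notation this is the pairing `i ↦ 2n-i+1`. -/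
def partner (n : ℕ) (i : Fin (2 * n)) : Fin (2 * n) :=
  ⟨2 * n - 1 - i.1, by have := i.2; omega⟩

/-- The standard symplectic form on `E = 𝔽^{2n}`:
`⟨e_i, e_j⟩ = 1` iff `j = partner i` and `i < j`, `-1` iff `i = partner j` and `j < i`,
and `0` otherwise. -/
def symForm (𝔽 : Type*) [Field 𝔽] (n : ℕ) (x y : Fin (2 * n) → 𝔽) : 𝔽 :=
  ∑ i : Fin n,
    (x ⟨i.1, by have := i.2; omega⟩ * y ⟨2 * n - 1 - i.1, by have := i.2; omega⟩ -
      x ⟨2 * n - 1 - i.1, by have := i.2; omega⟩ * y ⟨i.1, by have := i.2; omega⟩)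

/-- The Plücker coordinates of the decomposable tensor `w_1 ∧ ⋯ ∧ w_m ∈ Λ^m E`,
`E = 𝔽^{2n}`: the coordinate attached to an `m`-subset `S` of indices (an element of
`I(m, 2n)`) is the corresponding `m × m` minor. This identifies `Λ^m E` with the space of
functions `{S : Finset (Fin (2n)) // S.card = m} → 𝔽`. -/
def plucker (𝔽 : Type*) [Field 𝔽] (n m : ℕ) (w : Fin m → Fin (2 * n) → 𝔽)
    (S : {S : Finset (Fin (2 * n)) // S.card = m}) : 𝔽 :=
  Matrix.det (Matrix.of fun i j : Fin m => w i ((S.1.orderIsoOfFin S.2 j : Fin (2 * n))))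

/-- The affine cone over the Lagrangian Grassmannian `L(n, E)` in Plücker coordinates:
all tensors `w_1 ∧ ⋯ ∧ w_n` with `⟨w_i, w_j⟩ = 0` for all `i, j`. -/
def LagCone (𝔽 : Type*) [Field 𝔽] (n : ℕ) :
    Set ({S : Finset (Fin (2 * n)) // S.card = n} → 𝔽) :=
  {p | ∃ w : Fin n → Fin (2 * n) → 𝔽,
    (∀ i j, symForm 𝔽 n (w i) (w j) = 0) ∧ p = plucker 𝔽 n n w}

/-- Extend a coordinate vector indexed by `k`-subsets to all finsets, by `0`;
this encodes the convention that Plücker coordinates with repeated indices vanish. -/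
def coordExt (𝔽 : Type*) [Field 𝔽] (n k : ℕ)
    (p : {S : Finset (Fin (2 * n)) // S.card = k} → 𝔽) (S : Finset (Fin (2 * n))) : 𝔽 :=
  if h : S.card = k then p ⟨S, h⟩ else 0

/-- Removal of the `r`-th and `s`-th vectors (`r < s`) from an `n`-tuple:
`w_1, …, ŵ_r, …, ŵ_s, …, w_n`. -/
def removeTwo {𝔽 : Type*} [Field 𝔽] (n : ℕ) (w : Fin n → Fin (2 * n) → 𝔽) (r s : Fin n) :
    Fin (n - 2) → Fin (2 * n) → 𝔽 :=
  fun k => w (if k.1 < r.1 then ⟨k.1, by have := k.2; omega⟩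
    else if k.1 + 1 < s.1 then ⟨k.1 + 1, by have := k.2; omega⟩
    else ⟨k.1 + 2, by have := k.2; omega⟩)

/-- The value of the contraction map on the decomposable tensor `w_1 ∧ ⋯ ∧ w_n`:
`f(w_1∧⋯∧w_n) = Σ_{r<s} ⟨w_r, w_s⟩ (−1)^{r+s−1} w_1∧⋯∧ŵ_r∧⋯∧ŵ_s∧⋯∧w_n`,
written in Plücker coordinates of `Λ^{n-2} E`. (Indices here are 0-based, so the 1-based
sign `(−1)^{r+s−1}` becomes `(−1)^{r+s+1}`.) -/
def contractionDecomp (𝔽 : Type*) [Field 𝔽] (n : ℕ) (w : Fin n → Fin (2 * n) → 𝔽) :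
    {S : Finset (Fin (2 * n)) // S.card = n - 2} → 𝔽 :=
  fun t => ∑ r : Fin n, ∑ s : Fin n,
    if r < s then
      symForm 𝔽 n (w r) (w s) * (-1 : 𝔽) ^ (r.1 + s.1 + 1) *
        plucker 𝔽 n (n - 2) (removeTwo n w r s) t
    else 0

/-- The contraction functional `Π_{α_{rs}}` attached to a finset `t` (of cardinality `n-2`):
`Π_t (p) = Σ_{i=1}^n p_{i, t, 2n-i+1}`, where coordinates with repeated indices are `0`. -/
def PiVal (𝔽 : Type*) [Field 𝔽] (n : ℕ) (t : Finset (Fin (2 * n)))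
    (p : {S : Finset (Fin (2 * n)) // S.card = n} → 𝔽) : 𝔽 :=
  ∑ i : Fin n,
    coordExt 𝔽 n n p
      (insert ⟨i.1, by have := i.2; omega⟩
        (insert (partner n ⟨i.1, by have := i.2; omega⟩) t))

lemma orderIso_pair' (a b : Fin (2*2)) (hab : a < b) (h2 : ({a,b} : Finset (Fin (2*2))).card = 2)
    (i : Fin 2) : (({a,b} : Finset (Fin (2*2))).orderIsoOfFin h2 i : Fin (2*2)) = ![a,b] i := by
  rw [Finset.coe_orderIsoOfFin_apply]
  rw [← Finset.orderEmbOfFin_unique h2 (f := ![a,b]) ?_ ?_]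
  · intro j; fin_cases j <;> simp
  · intro x y hxy
    fin_cases x <;> fin_cases y <;>
      first
      | exact absurd hxy (by decide)
      | simpa using hab

lemma plucker_pair' (𝔽 : Type*) [Field 𝔽] (v w : Fin (2*2) → 𝔽) (a b : Fin (2*2)) (hab : a < b)
    (h2 : ({a,b} : Finset (Fin (2*2))).card = 2) :
    plucker 𝔽 2 2 ![v,w] ⟨{a,b},h2⟩ = v a * w b - v b * w a := by
  unfold plucker
  rw [Matrix.det_fin_two]
  simp [orderIso_pair' a b hab h2]

lemma symForm_two' (𝔽 : Type*) [Field 𝔽] (x y : Fin (2*2) → 𝔽) :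
    symForm 𝔽 2 x y = x 0 * y 3 - x 3 * y 0 + (x 1 * y 2 - x 2 * y 1) := by
  simp only [symForm, Fin.sum_univ_two]
  norm_num [show ((⟨0, by omega⟩ : Fin (2*2)) = 0) from rfl,
    show ((⟨1, by omega⟩ : Fin (2*2)) = 1) from rfl,
    show ((⟨2, by omega⟩ : Fin (2*2)) = 2) from rfl,
    show ((⟨3, by omega⟩ : Fin (2*2)) = 3) from rfl]

lemma henum' : ∀ T : {S : Finset (Fin (2*2)) // S.card = 2},
    T = ⟨{0,1}, by decide⟩ ∨ T = ⟨{0,2}, by decide⟩ ∨ T = ⟨{0,3}, by decide⟩ ∨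
    T = ⟨{1,2}, by decide⟩ ∨ T = ⟨{1,3}, by decide⟩ ∨ T = ⟨{2,3}, by decide⟩ := by decide

def eVec (𝔽 : Type*) [Field 𝔽] (a : Fin (2*2)) : Fin (2*2) → 𝔽 := fun j => if j = a then 1 else 0

lemma plucker_e01 (𝔽 : Type*) [Field 𝔽] :
    plucker 𝔽 2 2 ![eVec 𝔽 0, eVec 𝔽 1] =
      fun T => if T = ⟨{0,1}, by decide⟩ then 1 else 0 := by
  funext T
  rcases henum' T with rfl|rfl|rfl|rfl|rfl|rfl <;>
    rw [plucker_pair' 𝔽 _ _ _ _ (by decide)] <;>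
    simp (config := { decide := true }) [eVec, Subtype.ext_iff]

lemma plucker_e (𝔽 : Type*) [Field 𝔽] (a b : Fin (2*2)) (hab : a < b)
    (h2 : ({a,b} : Finset (Fin (2*2))).card = 2) :
    plucker 𝔽 2 2 ![eVec 𝔽 a, eVec 𝔽 b] = fun T => if T = ⟨{a,b}, h2⟩ then 1 else 0 := by
  fin_cases a <;> fin_cases b <;>
    first
    | exact absurd hab (by decide)
    | · funext T
        rcases henum' T with rfl|rfl|rfl|rfl|rfl|rfl <;>
          rw [plucker_pair' 𝔽 _ _ _ _ (by decide)] <;>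
          simp (config := { decide := true }) [eVec, Subtype.ext_iff]

lemma plucker_mixed (𝔽 : Type*) [Field 𝔽] :
    plucker 𝔽 2 2 ![fun j => eVec 𝔽 0 j + eVec 𝔽 2 j, fun j => eVec 𝔽 1 j + eVec 𝔽 3 j] =
      fun T => (if T = ⟨{0,1}, by decide⟩ then 1 else 0) + (if T = ⟨{0,3}, by decide⟩ then 1 else 0)
        - (if T = ⟨{1,2}, by decide⟩ then 1 else 0) + (if T = ⟨{2,3}, by decide⟩ then 1 else 0) := by
  funext T
  rcases henum' T with rfl|rfl|rfl|rfl|rfl|rfl <;>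
    rw [plucker_pair' 𝔽 _ _ _ _ (by decide)] <;>
    simp (config := { decide := true }) [eVec, Subtype.ext_iff]

/-- For a symplectic vector space `E` of dimension 4, any linear functional `h`
on `Λ²E` vanishing on all decomposables `v ∧ w` with `⟨v, w⟩ = 0` (the cone over `L(2,E)`) is
a scalar multiple of `X_{14} + X_{23}` (0-indexed: the coordinates at `{0,3}` and `{1,2}`). -/
theorem functional_vanishing_L2 (𝔽 : Type*) [Field 𝔽]
    (h : ({S : Finset (Fin (2 * 2)) // S.card = 2} → 𝔽) →ₗ[𝔽] 𝔽)
    (hvan : ∀ v w : Fin (2 * 2) → 𝔽, symForm 𝔽 2 v w = 0 → h (plucker 𝔽 2 2 ![v, w]) = 0) :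
    ∃ A : 𝔽, ∀ p, h p = A * (p ⟨{0, 3}, by decide⟩ + p ⟨{1, 2}, by decide⟩) := by
  classical
  have hrep : ∀ p : ({S : Finset (Fin (2*2)) // S.card = 2} → 𝔽),
      p = ∑ S, p S • (fun T => if T = S then (1:𝔽) else 0) := by
    intro p; funext T
    simp [Finset.sum_apply, mul_ite, mul_one, mul_zero, Finset.sum_ite_eq]
  have hsum : ∀ f : {S : Finset (Fin (2*2)) // S.card = 2} → 𝔽,
      ∑ T, f T = f ⟨{0,1},by decide⟩ + f ⟨{0,2},by decide⟩ + f ⟨{0,3},by decide⟩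
        + f ⟨{1,2},by decide⟩ + f ⟨{1,3},by decide⟩ + f ⟨{2,3},by decide⟩ := by
    intro f
    rw [show (Finset.univ : Finset {S : Finset (Fin (2*2)) // S.card = 2}) =
      {⟨{0,1},by decide⟩, ⟨{0,2},by decide⟩, ⟨{0,3},by decide⟩, ⟨{1,2},by decide⟩,
        ⟨{1,3},by decide⟩, ⟨{2,3},by decide⟩} from by decide]
    rw [Finset.sum_insert (by decide), Finset.sum_insert (by decide),
      Finset.sum_insert (by decide), Finset.sum_insert (by decide),
      Finset.sum_insert (by decide), Finset.sum_singleton]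
    ring
  have hbase : ∀ (a b : Fin (2*2)), a < b → symForm 𝔽 2 (eVec 𝔽 a) (eVec 𝔽 b) = 0 →
      ∀ h2 : ({a,b} : Finset (Fin (2*2))).card = 2,
      h (fun T => if T = ⟨{a,b}, h2⟩ then 1 else 0) = 0 := by
    intro a b hab hs h2
    have := hvan (eVec 𝔽 a) (eVec 𝔽 b) hs
    rwa [plucker_e 𝔽 a b hab h2] at this
  have h01 := hbase 0 1 (by decide)
    (by rw [symForm_two']; simp (config := { decide := true }) [eVec]) (by decide)
  have h02 := hbase 0 2 (by decide)
    (by rw [symForm_two']; simp (config := { decide := true }) [eVec]) (by decide)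
  have h13 := hbase 1 3 (by decide)
    (by rw [symForm_two']; simp (config := { decide := true }) [eVec]) (by decide)
  have h23 := hbase 2 3 (by decide)
    (by rw [symForm_two']; simp (config := { decide := true }) [eVec]) (by decide)
  have hmix : h ((fun T => if T = ⟨{0,1},by decide⟩ then (1:𝔽) else 0)
      + (fun T => if T = ⟨{0,3},by decide⟩ then 1 else 0)
      - (fun T => if T = ⟨{1,2},by decide⟩ then 1 else 0)
      + (fun T => if T = ⟨{2,3},by decide⟩ then 1 else 0)) = 0 := by
    have hs : symForm 𝔽 2 (fun j => eVec 𝔽 0 j + eVec 𝔽 2 j) (fun j => eVec 𝔽 1 j + eVec 𝔽 3 j) = 0 := by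
      rw [symForm_two']; simp (config := { decide := true }) [eVec]
    have := hvan _ _ hs
    rw [plucker_mixed] at this
    exact this
  simp only [map_add, map_sub] at hmix
  have h12 : h (fun T => if T = ⟨{1,2},by decide⟩ then (1:𝔽) else 0)
      = h (fun T => if T = ⟨{0,3},by decide⟩ then 1 else 0) := by
    linear_combination h01 + h23 - hmix
  refine ⟨h (fun T => if T = ⟨{0,3},by decide⟩ then 1 else 0), fun p => ?_⟩
  conv_lhs => rw [hrep p]
  rw [map_sum]
  simp only [map_smul, smul_eq_mul]
  rw [hsum (fun S => p S * h (fun T => if T = S then 1 else 0))]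
  rw [h01, h02, h13, h23, h12]
  ring
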